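/- Every full k-star on n ≥ k + k/r vertices, together with any additional k-set e not containing the center, contains an r-regular subgraph, provided r divides k and r ≥ 2. -/

import Mathlib

/-- A hypergraph `H` has an `r`-regular subgraph if some nonempty collection of its
edges covers every vertex of its span exactly `r` times. -/
def HasRegularSubgraph {α : Type*} [DecidableEq α] (H : Finset (Finset α)) (r : ℕ) : Prop :=
  ∃ R : Finset (Finset α), R ⊆ H ∧ R.Nonempty ∧
    ∀ v ∈ R.biUnion id, (R.filter (fun e => v ∈ e)).card = r

/-- If r ≥ 2 divides k, then the full k-star with center v on
n ≥ k + k/r vertices, together with any k-set e not containing v, contains an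
r-regular subgraph. -/
theorem stmt_10 {α : Type*} [Fintype α] [DecidableEq α] (k r : ℕ) (hr : 2 ≤ r)
    (hk : 0 < k) (hdvd : r ∣ k) (v : α) (hn : k + k / r ≤ Fintype.card α)
    (e : Finset α) (he : e.card = k) (hv : v ∉ e) :
    HasRegularSubgraph
      (((Finset.univ.powersetCard k).filter (fun s => v ∈ s)) ∪ {e}) r := by
  classical
  obtain ⟨m, hkm⟩ := hdvd
  have hr0 : 0 < r := by omega
  have hm0 : 0 < m := by
    rcases Nat.eq_zero_or_pos m with h | h
    · subst h; omega
    · exact h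
  have hmk : m ≤ k := by
    calc m = 1 * m := (one_mul m).symm
    _ ≤ r * m := Nat.mul_le_mul_right m (by omega)
    _ = k := hkm.symm
  have hmdef : k / r = m := by subst hkm; exact Nat.mul_div_cancel_left m hr0
  -- choose g disjoint from e ∪ {v}, of size m - 1
  have hcard : m - 1 ≤ (Finset.univ \ insert v e).card := by
    rw [Finset.card_sdiff_of_subset (Finset.subset_univ _), Finset.card_univ,
        Finset.card_insert_of_notMem hv, he]
    omega
  obtain ⟨g, hg_sub, hg_card⟩ := Finset.exists_subset_card_eq hcard
  have hgv : v ∉ g := fun h => (Finset.mem_sdiff.mp (hg_sub h)).2 (Finset.mem_insert_self _ _)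
  have hge : ∀ x ∈ g, x ∉ e := fun x h hx =>
    (Finset.mem_sdiff.mp (hg_sub h)).2 (Finset.mem_insert_of_mem hx)
  -- enumerate e
  let σ : {x // x ∈ e} ≃ Fin (r * m) := e.equivFin.trans (finCongr (he.trans hkm))
  -- the parts
  let E : Fin r → Finset α := fun j =>
    (e.attach.filter (fun x => (σ x : ℕ) / m = (j : ℕ))).image Subtype.val
  have hE_mem : ∀ (x : α) (hx : x ∈ e) (j : Fin r),
      x ∈ E j ↔ (σ ⟨x, hx⟩ : ℕ) / m = (j : ℕ) := by
    intro x hx j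
    simp only [E, Finset.mem_image, Finset.mem_filter, Finset.mem_attach, true_and]
    constructor
    · rintro ⟨a, ha, rfl⟩
      exact ha
    · intro h
      exact ⟨⟨x, hx⟩, h, rfl⟩
  have hE_sub : ∀ j, E j ⊆ e := by
    intro j x hx
    simp only [E, Finset.mem_image] at hx
    obtain ⟨a, _, rfl⟩ := hx
    exact a.2
  -- size of a division fiber in Fin (r*m)
  have fib : ∀ j : Fin r,
      (Finset.univ.filter (fun i : Fin (r * m) => (i : ℕ) / m = (j : ℕ))).card = m := by
    intro j
    have hlt : ∀ t : Fin m, (j : ℕ) * m + (t : ℕ) < r * m := by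
      intro t
      calc (j : ℕ) * m + (t : ℕ) < (j : ℕ) * m + m := by omega
      _ = ((j : ℕ) + 1) * m := by ring
      _ ≤ r * m := Nat.mul_le_mul_right m (by omega)
    have himg : Finset.univ.filter (fun i : Fin (r * m) => (i : ℕ) / m = (j : ℕ))
        = Finset.univ.image (fun t : Fin m => (⟨(j : ℕ) * m + (t : ℕ), hlt t⟩ : Fin (r * m))) := by
      ext i
      simp only [Finset.mem_filter, Finset.mem_univ, true_and, Finset.mem_image]
      constructor
      · intro hdiv
        refine ⟨⟨(i : ℕ) % m, Nat.mod_lt _ hm0⟩, ?_⟩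
        apply Fin.ext
        simp only
        rw [← hdiv, mul_comm, Nat.div_add_mod]
      · rintro ⟨t, rfl⟩
        simp only
        rw [add_comm, Nat.add_mul_div_right _ _ hm0, Nat.div_eq_of_lt t.2, zero_add]
    rw [himg, Finset.card_image_of_injective _ (fun a b hab => by
      apply Fin.ext
      have := Fin.val_eq_of_eq hab
      simp only at this
      omega)]
    simp
  have hE_card : ∀ j, (E j).card = m := by
    intro j
    have h1 : (E j).card =
        (e.attach.filter (fun x => (σ x : ℕ) / m = (j : ℕ))).card :=
      Finset.card_image_of_injective _ Subtype.val_injective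
    rw [h1]
    refine Eq.trans ?_ (fib j)
    apply Finset.card_bij (fun x _ => σ x)
    · intro a ha
      simp only [Finset.mem_filter, Finset.mem_attach, true_and, Finset.mem_univ] at ha ⊢
      exact ha
    · intro a ha b hb hab
      exact σ.injective hab
    · intro b hb
      refine ⟨σ.symm b, ?_, by simp⟩
      simp only [Finset.mem_filter, Finset.mem_attach, true_and, Equiv.apply_symm_apply]
      simpa using (Finset.mem_filter.mp hb).2
  -- the edges
  let f : Fin r → Finset α := fun j => insert v ((e \ E j) ∪ g)
  have hvf : ∀ j, v ∈ f j := fun j => Finset.mem_insert_self _ _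
  have hf_card : ∀ j, (f j).card = k := by
    intro j
    have hdisj : Disjoint (e \ E j) g := by
      rw [Finset.disjoint_right]
      intro x hx hxe
      exact hge x hx (Finset.mem_sdiff.mp hxe).1
    have hvnot : v ∉ (e \ E j) ∪ g := by
      simp only [Finset.mem_union, Finset.mem_sdiff, not_or]
      exact ⟨fun h => hv h.1, hgv⟩
    rw [show f j = insert v ((e \ E j) ∪ g) from rfl,
      Finset.card_insert_of_notMem hvnot, Finset.card_union_of_disjoint hdisj,
      Finset.card_sdiff_of_subset (hE_sub j), he, hE_card j, hg_card]
    omega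
  -- the star
  have hfH : ∀ j, f j ∈
      ((Finset.univ.powersetCard k).filter (fun s => v ∈ s)) ∪ {e} := by
    intro j
    apply Finset.mem_union_left
    rw [Finset.mem_filter, Finset.mem_powersetCard]
    exact ⟨⟨Finset.subset_univ _, hf_card j⟩, hvf j⟩
  have heH : e ∈ ((Finset.univ.powersetCard k).filter (fun s => v ∈ s)) ∪ {e} :=
    Finset.mem_union_right _ (Finset.mem_singleton_self e)
  -- injectivity of f
  have hf_inj : Function.Injective f := by
    intro i j hij
    have hcap : ∀ l : Fin r, (f l) ∩ e = e \ E l := by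
      intro l
      ext x
      simp only [f, Finset.mem_inter, Finset.mem_insert, Finset.mem_union, Finset.mem_sdiff]
      constructor
      · rintro ⟨(rfl | h | h), hxe⟩
        · exact absurd hxe hv
        · exact h
        · exact absurd hxe (hge x h)
      · rintro ⟨hxe, hxE⟩
        exact ⟨Or.inr (Or.inl ⟨hxe, hxE⟩), hxe⟩
    have hEeq : E i = E j := by
      have h1 : e \ E i = e \ E j := by rw [← hcap i, ← hcap j, hij]
      have h2 : e \ (e \ E i) = e \ (e \ E j) := by rw [h1]
      rwa [Finset.sdiff_sdiff_eq_self (hE_sub i),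
        Finset.sdiff_sdiff_eq_self (hE_sub j)] at h2
    have hne : (E i).Nonempty := by
      rw [← Finset.card_pos, hE_card]; exact hm0
    obtain ⟨x, hx⟩ := hne
    have hxe : x ∈ e := hE_sub i hx
    have h1 := (hE_mem x hxe i).mp hx
    have h2 := (hE_mem x hxe j).mp (hEeq ▸ hx)
    exact Fin.ext (h1.symm.trans h2)
  -- e is not among the f j
  have he_not : e ∉ Finset.univ.image f := by
    intro h
    obtain ⟨j, _, hj⟩ := Finset.mem_image.mp h
    exact hv (hj ▸ hvf j)
  -- the regular subgraph
  refine ⟨insert e (Finset.univ.image f), ?_, ⟨e, Finset.mem_insert_self _ _⟩, ?_⟩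
  · intro s hs
    rcases Finset.mem_insert.mp hs with rfl | hs
    · exact heH
    · obtain ⟨j, _, rfl⟩ := Finset.mem_image.mp hs
      exact hfH j
  · intro w hw
    -- w is in e, g, or equals v
    have hw' : w ∈ e ∨ w ∈ g ∨ w = v := by
      simp only [Finset.mem_biUnion, id] at hw
      obtain ⟨s, hs, hws⟩ := hw
      rcases Finset.mem_insert.mp hs with rfl | hs
      · exact Or.inl hws
      · obtain ⟨j, _, rfl⟩ := Finset.mem_image.mp hs
        simp only [f, Finset.mem_insert, Finset.mem_union, Finset.mem_sdiff] at hws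
        rcases hws with rfl | ⟨h, _⟩ | h
        · exact Or.inr (Or.inr rfl)
        · exact Or.inl h
        · exact Or.inr (Or.inl h)
    rw [Finset.filter_insert]
    rw [Finset.filter_image]
    rcases hw' with hwe | hwg | rfl
    · -- w ∈ e
      rw [if_pos hwe]
      have hwv : w ≠ v := fun h => hv (h ▸ hwe)
      have hwg' : w ∉ g := fun h => hge w h hwe
      set c : Fin r := ⟨(σ ⟨w, hwe⟩ : ℕ) / m,
        (Nat.div_lt_iff_lt_mul hm0).mpr (σ ⟨w, hwe⟩).2⟩ with hc
      have hkey : (Finset.univ.filter (fun j => w ∈ f j)) = Finset.univ.erase c := by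
        ext j
        simp only [Finset.mem_filter, Finset.mem_univ, true_and, Finset.mem_erase, and_true]
        have : w ∈ f j ↔ w ∉ E j := by
          simp only [f, Finset.mem_insert, Finset.mem_union, Finset.mem_sdiff]
          constructor
          · rintro (rfl | ⟨_, h⟩ | h)
            · exact absurd rfl hwv
            · exact h
            · exact absurd h hwg'
          · intro h
            exact Or.inr (Or.inl ⟨hwe, h⟩)
        rw [this, hE_mem w hwe j]
        constructor
        · intro h hjc
          exact h (by rw [hjc])
        · intro h habs
          exact h (Fin.ext habs.symm)
      rw [hkey, Finset.card_insert_of_notMem (by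
        intro h
        apply he_not
        exact Finset.image_subset_image (Finset.subset_univ _) h),
        Finset.card_image_of_injective _ hf_inj, Finset.card_erase_of_mem (Finset.mem_univ c),
        Finset.card_univ, Fintype.card_fin]
      omega
    · -- w ∈ g
      have hwe : w ∉ e := hge w hwg
      rw [if_neg hwe]
      have hall : (Finset.univ.filter (fun j => w ∈ f j)) = Finset.univ := by
        apply Finset.filter_true_of_mem
        intro j _
        exact Finset.mem_insert_of_mem (Finset.mem_union_right _ hwg)
      rw [hall, Finset.card_image_of_injective _ hf_inj, Finset.card_univ, Fintype.card_fin]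
    · -- w = v
      rw [if_neg hv]
      have hall : (Finset.univ.filter (fun j => w ∈ f j)) = Finset.univ := by
        apply Finset.filter_true_of_mem
        intro j _
        exact hvf j
      rw [hall, Finset.card_image_of_injective _ hf_inj, Finset.card_univ, Fintype.card_fin]
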